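/- arXiv:1401.4772 — 4 statements merged into one kernel-verified Lean document; each statement's English description precedes it below -/
import Mathlib

section
/- Let G be a groupoid and n a positive natural number such that for every object x of G and every morphism g : x ⟶ x, the n-fold composite of g with itself equals the identity of x. Then the precomposition functor from (SingleObj (Multiplicative (ZMod n)) ⥤ G) to (SingleObj (Multiplicative ℤ) ⥤ G), induced by the quotient homomorphism Multiplicative ℤ →* Multiplicative (ZMod n), is bijective on objects and fully faithful; in particular it is an equivalence of categories. -/
open CategoryTheory

section Aux

variable {G : Type*} [Groupoid G] {n : ℕ}

private abbrev auxφ (n : ℕ) : Multiplicative ℤ →* Multiplicative (ZMod n) :=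
  AddMonoidHom.toMultiplicative (Int.castAddHom (ZMod n))

private lemma auxφ_surjective (n : ℕ) : Function.Surjective (auxφ n) := fun a => by
  obtain ⟨k, hk⟩ := ZMod.intCast_surjective (n := n) (Multiplicative.toAdd a)
  exact ⟨Multiplicative.ofAdd k, by simp [auxφ, hk]⟩

private lemma aux_inj (F₁ F₂ : SingleObj (Multiplicative (ZMod n)) ⥤ G)
    (hF : (auxφ n).toFunctor ⋙ F₁ = (auxφ n).toFunctor ⋙ F₂) : F₁ = F₂ := by
  apply CategoryTheory.Functor.ext
  · intro x y f
    obtain ⟨k, rfl⟩ := auxφ_surjective n f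
    exact Functor.congr_hom hF (k : Quiver.SingleObj.star (Multiplicative ℤ) ⟶
      Quiver.SingleObj.star (Multiplicative ℤ))

private lemma aux_surj (hn : 0 < n) (h : ∀ (x : G) (g : CategoryTheory.End x), g ^ n = 1)
    (F : SingleObj (Multiplicative ℤ) ⥤ G) :
    ∃ F' : SingleObj (Multiplicative (ZMod n)) ⥤ G, (auxφ n).toFunctor ⋙ F' = F := by
  haveI : NeZero n := ⟨hn.ne'⟩
  set x : G := F.obj (SingleObj.star (Multiplicative ℤ)) with hx
  set g : CategoryTheory.End x := F.map (Multiplicative.ofAdd (1 : ℤ)) with hg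
  have hgn : g ^ n = 1 := h x g
  let fh : Multiplicative ℤ →* CategoryTheory.End x :=
    { toFun := fun a => F.map a
      map_one' := F.map_id _
      map_mul' := fun a b => F.map_comp b a }
  have hFk : ∀ k : ℤ, F.map (Multiplicative.ofAdd k) = g ^ k := by
    intro k
    have h1 : Multiplicative.ofAdd k = (Multiplicative.ofAdd (1 : ℤ)) ^ k := by
      rw [← ofAdd_zsmul]; simp
    have : F.map (Multiplicative.ofAdd k) = fh ((Multiplicative.ofAdd (1 : ℤ)) ^ k) := by
      rw [← h1]; rfl
    rw [this, map_zpow]; rfl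
  let ψ : Multiplicative (ZMod n) →* CategoryTheory.End x :=
    { toFun := fun a => g ^ (Multiplicative.toAdd a).val
      map_one' := by simp
      map_mul' := fun a b => by
        show g ^ (Multiplicative.toAdd a + Multiplicative.toAdd b).val
          = g ^ (Multiplicative.toAdd a).val * g ^ (Multiplicative.toAdd b).val
        rw [ZMod.val_add, ← pow_eq_pow_mod _ hgn, pow_add] }
  refine ⟨SingleObj.functor ψ, ?_⟩
  apply CategoryTheory.Functor.ext
  · intro y z f
    show _ = 𝟙 _ ≫ F.map f ≫ 𝟙 _
    simp only [Category.comp_id, Category.id_comp]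
    show ψ (auxφ n f) = F.map f
    have hf : f = Multiplicative.ofAdd (Multiplicative.toAdd f) := rfl
    rw [hf, hFk]
    show g ^ (((Multiplicative.toAdd f : ℤ) : ZMod n)).val = _
    have : (g ^ (((Multiplicative.toAdd f : ℤ) : ZMod n)).val : CategoryTheory.End x)
        = g ^ ((((Multiplicative.toAdd f : ℤ) : ZMod n)).val : ℤ) := (zpow_natCast _ _).symm
    rw [this, ZMod.val_intCast, ← zpow_eq_zpow_emod' _ hgn]
  · intro y
    rfl

private lemma aux_faithful (n : ℕ) :
    ((Functor.whiskeringLeft (SingleObj (Multiplicative ℤ)) (SingleObj (Multiplicative (ZMod n))) G).obj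
      (auxφ n).toFunctor).Faithful := by
  constructor
  intro F₁ F₂ α β hab
  ext y
  exact congr_fun (congrArg NatTrans.app hab) (SingleObj.star (Multiplicative ℤ))

private lemma aux_full (n : ℕ) :
    ((Functor.whiskeringLeft (SingleObj (Multiplicative ℤ)) (SingleObj (Multiplicative (ZMod n))) G).obj
      (auxφ n).toFunctor).Full := by
  constructor
  intro F₁ F₂ γ
  refine ⟨SingleObj.natTrans (γ.app (SingleObj.star (Multiplicative ℤ))) ?_, ?_⟩
  · intro a
    obtain ⟨k, rfl⟩ := auxφ_surjective n a
    exact γ.naturality (k : Quiver.SingleObj.star (Multiplicative ℤ) ⟶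
      Quiver.SingleObj.star (Multiplicative ℤ))
  · ext y
    rfl

end Aux

/-- Let `G` be a groupoid and `n` a positive natural number such that every endomorphism
`g : x ⟶ x` in `G` satisfies `g ^ n = 𝟙 x`.  Then the precomposition functor from
`SingleObj (Multiplicative (ZMod n)) ⥤ G` to `SingleObj (Multiplicative ℤ) ⥤ G` (the inertia
groupoid of `G`), induced by the reduction-mod-`n` homomorphism, is bijective on objects and
fully faithful; in particular it is an equivalence of categories. -/
theorem whiskeringLeft_zmod_reduction_equivalence_of_torsion
    (G : Type*) [Groupoid G] (n : ℕ) (hn : 0 < n)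
    (h : ∀ (x : G) (g : CategoryTheory.End x), g ^ n = 1) :
    Function.Bijective
      (((Functor.whiskeringLeft (SingleObj (Multiplicative ℤ))
          (SingleObj (Multiplicative (ZMod n))) G).obj
        (AddMonoidHom.toMultiplicative (Int.castAddHom (ZMod n))).toFunctor).obj) ∧
    ((Functor.whiskeringLeft (SingleObj (Multiplicative ℤ)) (SingleObj (Multiplicative (ZMod n))) G).obj
        (AddMonoidHom.toMultiplicative (Int.castAddHom (ZMod n))).toFunctor).Full ∧
    ((Functor.whiskeringLeft (SingleObj (Multiplicative ℤ)) (SingleObj (Multiplicative (ZMod n))) G).obj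
        (AddMonoidHom.toMultiplicative (Int.castAddHom (ZMod n))).toFunctor).Faithful ∧
    ((Functor.whiskeringLeft (SingleObj (Multiplicative ℤ)) (SingleObj (Multiplicative (ZMod n))) G).obj
        (AddMonoidHom.toMultiplicative (Int.castAddHom (ZMod n))).toFunctor).IsEquivalence := by
  have hful := aux_full (G := G) n
  have hfai := aux_faithful (G := G) n
  have hbij : Function.Bijective
      (((Functor.whiskeringLeft (SingleObj (Multiplicative ℤ))
          (SingleObj (Multiplicative (ZMod n))) G).obj (auxφ n).toFunctor).obj) :=
    ⟨fun F₁ F₂ hF => aux_inj F₁ F₂ hF, fun F => aux_surj hn h F⟩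
  refine ⟨hbij, hful, hfai, ?_⟩
  have : ((Functor.whiskeringLeft (SingleObj (Multiplicative ℤ))
      (SingleObj (Multiplicative (ZMod n))) G).obj (auxφ n).toFunctor).EssSurj :=
    ⟨fun F => ⟨(aux_surj hn h F).choose, ⟨eqToIso (aux_surj hn h F).choose_spec⟩⟩⟩
  exact { full := hful, faithful := hfai, essSurj := this }
end

section
/- Let G be a groupoid, ι a finite (nonempty as needed) index type, and s : ι → G a family of objects such that every object of G is isomorphic to s i for some i, and such that the set of morphisms s i ⟶ s i is finite for each i. Then there exists a positive natural number n such that for every object x of G and every morphism g : x ⟶ x, the n-fold composite of g with itself equals the identity of x. -/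
open CategoryTheory

/-- Let `G` be a groupoid, `ι` a finite index type and `s : ι → G` a family of objects such that
every object of `G` is isomorphic to some `s i`, with each endomorphism set `s i ⟶ s i` finite.
Then there is a positive natural number `n` such that every endomorphism `g : x ⟶ x` in `G`
satisfies `g ^ n = 𝟙 x`. -/
theorem exists_uniform_torsion_exponent
    (G : Type*) [Groupoid G] (ι : Type*) [Finite ι] (s : ι → G)
    (hcover : ∀ x : G, ∃ i : ι, Nonempty (x ≅ s i))
    (hfin : ∀ i : ι, Finite (s i ⟶ s i)) :
    ∃ n : ℕ, 0 < n ∧ ∀ (x : G) (g : CategoryTheory.End x), g ^ n = 1 := by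
  classical
  haveI : Fintype ι := Fintype.ofFinite ι
  refine ⟨∏ i : ι, Nat.card (CategoryTheory.End (s i)), ?_, ?_⟩
  · refine Finset.prod_pos fun i _ => ?_
    haveI : Finite (CategoryTheory.End (s i)) := hfin i
    exact Nat.card_pos
  · intro x g
    obtain ⟨i, ⟨e⟩⟩ := hcover x
    -- conjugation monoid hom from End x to End (s i)
    let f : CategoryTheory.End x →* CategoryTheory.End (s i) :=
      { toFun := fun h => e.inv ≫ h ≫ e.hom
        map_one' := by simp [CategoryTheory.End.one_def]
        map_mul' := by
          intro a b
          simp [CategoryTheory.End.mul_def, CategoryTheory.Category.assoc] }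
    have hinj : Function.Injective f := by
      intro a b hab
      have := congrArg (fun h => e.hom ≫ h ≫ e.inv) hab
      simpa [f, CategoryTheory.Category.assoc] using this
    haveI : Finite (CategoryTheory.End (s i)) := hfin i
    haveI : Finite (CategoryTheory.End x) := Finite.of_injective f hinj
    have hcard : Nat.card (CategoryTheory.End x) ∣
        ∏ i : ι, Nat.card (CategoryTheory.End (s i)) := by
      have : Nat.card (CategoryTheory.End x) ∣ Nat.card (CategoryTheory.End (s i)) := by
        have h1 : Nat.card (CategoryTheory.End x) = Nat.card f.range :=
          Nat.card_congr (Equiv.ofInjective f hinj)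
        rw [h1]
        exact Subgroup.card_subgroup_dvd_card f.range
      exact this.trans (Finset.dvd_prod_of_mem _ (Finset.mem_univ i))
    obtain ⟨k, hk⟩ := hcard
    rw [hk, pow_mul, pow_card_eq_one', one_pow]
end

section
/- Let G be a groupoid, ι a finite index type, and s : ι → G a family of objects such that every object of G is isomorphic to s i for some i, and such that the set of morphisms s i ⟶ s i is finite for each i. Then there exists a positive natural number n such that the precomposition functor from (SingleObj (Multiplicative (ZMod n)) ⥤ G) to (SingleObj (Multiplicative ℤ) ⥤ G), induced by the quotient homomorphism Multiplicative ℤ →* Multiplicative (ZMod n), is an equivalence of categories. -/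
open CategoryTheory

/-- Let `G` be a groupoid, `ι` a finite index type and `s : ι → G` a family of objects such that
every object of `G` is isomorphic to some `s i`, with each endomorphism set `s i ⟶ s i` finite
(orbit compactness).  Then there is a positive natural number `n` such that the precomposition
functor from `SingleObj (Multiplicative (ZMod n)) ⥤ G` to `SingleObj (Multiplicative ℤ) ⥤ G`
(the inertia groupoid of `G`), induced by the reduction-mod-`n` homomorphism, is an equivalence
of categories. -/
theorem exists_zmod_reduction_whiskeringLeft_equivalence
    (G : Type*) [Groupoid G] (ι : Type*) [Finite ι] (s : ι → G)
    (hcover : ∀ x : G, ∃ i : ι, Nonempty (x ≅ s i))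
    (hfin : ∀ i : ι, Finite (s i ⟶ s i)) :
    ∃ n : ℕ, 0 < n ∧
      (((Functor.whiskeringLeft (SingleObj (Multiplicative ℤ))
          (SingleObj (Multiplicative (ZMod n))) G).obj
        (AddMonoidHom.toMultiplicative (Int.castAddHom (ZMod n))).toFunctor).IsEquivalence) := by
  classical
  have _inst := Fintype.ofFinite ι
  set n : ℕ := ∏ i, Nat.card (s i ⟶ s i) with hn
  have hnpos : 0 < n := by
    refine Finset.prod_pos fun i _ => ?_
    have := hfin i
    have : Nonempty (s i ⟶ s i) := ⟨𝟙 (s i)⟩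
    exact Nat.card_pos
  -- key: every endomorphism has order dividing n
  have key : ∀ (x : G) (g : End x), g ^ n = 1 := by
    intro x g
    obtain ⟨i, ⟨e⟩⟩ := hcover x
    have hfi := hfin i
    have hEq : (x ⟶ x) ≃ (s i ⟶ s i) := e.homCongr e
    have : Finite (End x) := Finite.of_equiv _ hEq.symm
    have hcard : Nat.card (End x) = Nat.card (s i ⟶ s i) := Nat.card_congr hEq
    have hdvd : Nat.card (End x) ∣ n := by
      rw [hcard, hn]
      exact Finset.dvd_prod_of_mem _ (Finset.mem_univ i)
    exact orderOf_dvd_iff_pow_eq_one.mp ((orderOf_dvd_natCard g).trans hdvd)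
  refine ⟨n, hnpos, ?_⟩
  set π : SingleObj (Multiplicative ℤ) ⥤ SingleObj (Multiplicative (ZMod n)) :=
    (AddMonoidHom.toMultiplicative (Int.castAddHom (ZMod n))).toFunctor with hπ
  have hπmap : ∀ k : Multiplicative ℤ,
      π.map (X := SingleObj.star _) (Y := SingleObj.star _) k
        = Multiplicative.ofAdd ((Multiplicative.toAdd k : ℤ) : ZMod n) := fun _ => rfl
  constructor
  case full =>
    refine ⟨fun {F F'} β => ?_⟩
    have h : ∀ a : Multiplicative (ZMod n),
        F.map a ≫ β.app (SingleObj.star _) = β.app (SingleObj.star _) ≫ F'.map a := by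
      intro a
      obtain ⟨k, hk⟩ := ZMod.intCast_surjective (Multiplicative.toAdd a)
      have ha : a = π.map (X := SingleObj.star _) (Y := SingleObj.star _)
          (Multiplicative.ofAdd k) := by
        rw [hπmap]
        simp [hk]
      have := β.naturality (X := SingleObj.star _) (Y := SingleObj.star _)
        (Multiplicative.ofAdd k)
      simpa [ha] using this
    refine ⟨SingleObj.natTrans (β.app (SingleObj.star _)) h, ?_⟩
    apply NatTrans.ext
    funext j
    rfl
  case faithful =>
    refine ⟨fun {F F'} {α β} h => ?_⟩
    apply NatTrans.ext
    funext j
    have := congrArg (fun (γ : π ⋙ F ⟶ π ⋙ F') => γ.app (SingleObj.star _)) h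
    exact this
  case essSurj =>
    refine ⟨fun F => ?_⟩
    set x : G := F.obj (SingleObj.star _) with hx
    set χ : Multiplicative ℤ →* End x :=
      (F.mapEnd _).comp (SingleObj.toEnd (Multiplicative ℤ)).toMonoidHom with hχ
    set g : End x := χ (Multiplicative.ofAdd 1) with hgdef
    have hg : g ^ n = 1 := key x g
    set f : ℤ →+ Additive (End x) := zmultiplesHom _ (Additive.ofMul g) with hfdef
    have hf : f (n : ℤ) = 0 := by
      rw [hfdef]
      simp only [zmultiplesHom_apply]
      rw [← ofMul_zpow, zpow_natCast, hg]
      rfl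
    set ψ : Multiplicative (ZMod n) →* End x :=
      AddMonoidHom.toMultiplicativeLeft (ZMod.lift n ⟨f, hf⟩) with hψ
    refine ⟨SingleObj.functor ψ, ⟨NatIso.ofComponents (fun _ => Iso.refl x) ?_⟩⟩
    intro _ _ k
    have hψk : (SingleObj.functor ψ).map (π.map k)
        = ψ (Multiplicative.ofAdd ((Multiplicative.toAdd k : ℤ) : ZMod n)) := by
      rw [hπmap]; rfl
    have hFk : F.map k = χ k := rfl
    have hk : k = Multiplicative.ofAdd 1 ^ (Multiplicative.toAdd k) := by
      rw [← ofAdd_zsmul]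
      simp
    have main : (SingleObj.functor ψ).map (π.map k) = F.map k := by
     rw [hψk, hFk]
     calc ψ (Multiplicative.ofAdd ((Multiplicative.toAdd k : ℤ) : ZMod n))
        = Additive.toMul ((ZMod.lift n ⟨f, hf⟩) ((Multiplicative.toAdd k : ℤ) : ZMod n)) := rfl
      _ = Additive.toMul (f (Multiplicative.toAdd k)) := by rw [ZMod.lift_coe]
      _ = g ^ (Multiplicative.toAdd k) := by
          rw [hfdef]
          simp only [zmultiplesHom_apply]
          rw [← ofMul_zpow]
          rfl
      _ = χ k := by
          conv_rhs => rw [hk]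
          rw [map_zpow, hgdef]
    show (SingleObj.functor ψ).map (π.map k) ≫ 𝟙 x = 𝟙 x ≫ F.map k
    rw [main]
    simp
    exact Category.comp_id _
end

section
/- Let X be a nonempty connected topological space, Y a topological space, and G a group equipped with the discrete topology acting on Y such that for each g ∈ G the map y ↦ g • y is continuous. Then the map sending a pair (g, f) ∈ G × C(X, Y) to the triple (f, f', α), where f' ∈ C(X, Y) is the pointwise translate x ↦ g • f x and α ∈ C(X, G × Y) is x ↦ (g, f x), is a bijection from G × C(X, Y) onto the set of triples (f, f', α) with f, f' ∈ C(X, Y) and α ∈ C(X, G × Y) satisfying (α x).2 = f x and (α x).1 • (α x).2 = f' x for all x ∈ X. -/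
/-- Let `X` be a nonempty connected topological space, `Y` a topological space, and `G` a group
with the discrete topology acting on `Y` with each translation `y ↦ g • y` continuous.  Then
`(g, f) ↦ (f, x ↦ g • f x, x ↦ (g, f x))` is a bijection from `G × C(X, Y)` onto the set of
triples `(f, f', α)` with `f, f' ∈ C(X, Y)`, `α ∈ C(X, G × Y)`, `(α x).2 = f x` and
`(α x).1 • (α x).2 = f' x` for all `x`. -/
theorem translation_groupoid_mapping_arrows_bijection
    (X : Type*) [TopologicalSpace X] [ConnectedSpace X]
    (Y : Type*) [TopologicalSpace Y]
    (G : Type*) [Group G] [TopologicalSpace G] [DiscreteTopology G]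
    [MulAction G Y] (hcont : ∀ g : G, Continuous fun y : Y => g • y) :
    ∃ e : G × C(X, Y) ≃
        {T : C(X, Y) × C(X, Y) × C(X, G × Y) //
          ∀ x : X, (T.2.2 x).2 = T.1 x ∧ (T.2.2 x).1 • (T.2.2 x).2 = T.2.1 x},
      ∀ (g : G) (f : C(X, Y)),
        (e (g, f)).1.1 = f ∧
        (∀ x : X, (e (g, f)).1.2.1 x = g • f x) ∧
        (∀ x : X, (e (g, f)).1.2.2 x = (g, f x)) := by
  obtain ⟨x₀⟩ := (inferInstance : Nonempty X)
  -- forward map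
  let F : G × C(X, Y) →
      {T : C(X, Y) × C(X, Y) × C(X, G × Y) //
        ∀ x : X, (T.2.2 x).2 = T.1 x ∧ (T.2.2 x).1 • (T.2.2 x).2 = T.2.1 x} :=
    fun p => ⟨(p.2, ⟨fun x => p.1 • p.2 x, (hcont p.1).comp p.2.continuous⟩,
      ⟨fun x => (p.1, p.2 x), continuous_const.prodMk p.2.continuous⟩),
      fun x => ⟨rfl, rfl⟩⟩
  -- backward map
  let B : {T : C(X, Y) × C(X, Y) × C(X, G × Y) //
        ∀ x : X, (T.2.2 x).2 = T.1 x ∧ (T.2.2 x).1 • (T.2.2 x).2 = T.2.1 x} →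
      G × C(X, Y) := fun T => ((T.1.2.2 x₀).1, T.1.1)
  have key : ∀ (T : {T : C(X, Y) × C(X, Y) × C(X, G × Y) //
        ∀ x : X, (T.2.2 x).2 = T.1 x ∧ (T.2.2 x).1 • (T.2.2 x).2 = T.2.1 x}) (x : X),
      (T.1.2.2 x).1 = (T.1.2.2 x₀).1 := by
    intro T x
    have hc : Continuous fun x => (T.1.2.2 x).1 := continuous_fst.comp T.1.2.2.continuous
    have hlc : IsLocallyConstant fun x => (T.1.2.2 x).1 :=
      (IsLocallyConstant.iff_continuous _).mpr hc
    exact hlc.apply_eq_of_preconnectedSpace x x₀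
  refine ⟨⟨F, B, ?_, ?_⟩, fun g f => ⟨rfl, fun x => rfl, fun x => rfl⟩⟩
  · rintro ⟨g, f⟩
    rfl
  · rintro ⟨⟨f, f', α⟩, hT⟩
    have h1 : ∀ x, (α x).2 = f x := fun x => (hT x).1
    have h2 : ∀ x, (α x).1 • (α x).2 = f' x := fun x => (hT x).2
    have hg : ∀ x, (α x).1 = (α x₀).1 := fun x => key ⟨(f, f', α), hT⟩ x
    apply Subtype.ext
    refine Prod.ext rfl (Prod.ext ?_ ?_)
    · ext x
      simp only [ContinuousMap.coe_mk]
      rw [← h2 x, hg x, h1 x]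
      rfl
    · ext x : 1
      simp only [ContinuousMap.coe_mk]
      exact Prod.ext (hg x).symm (h1 x).symm
end
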